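/- arXiv:1707.07967 — 3 statements merged into one kernel-verified Lean document; each statement's English description precedes it below -/
import Mathlib

section
/- (Time derivative of the Legendre coefficients) Let u : [0,1] × [0,∞) → ℝ have continuous partial derivatives ∂ₜu, ∂ₓu, ∂ₓₓu, and satisfy the heat equation ∂ₜu(x,t) = γ ∂ₓₓu(x,t) on (0,1) with ∂ₓu(1,t) = 0, where γ > 0. Then for every t > 0: (1/γ)·d/dt ⟨u(·,t), L_0⟩ = −∂ₓu(0,t); (1/γ)·d/dt ⟨u(·,t), L_1⟩ = 2u(0,t) − 2u(1,t) + ∂ₓu(0,t); and for every k ≥ 2, (1/γ)·d/dt ⟨u(·,t), L_k⟩ = Σ_{j=1}^{k−1} Σ_{i=0}^{j−1} ℓ_{kj} ℓ_{ji} ⟨u(·,t), L_i⟩ + u(0,t)·Σ_{j=0}^{k−1} ℓ_{kj} (−1)^j − u(1,t)·Σ_{j=0}^{k−1} ℓ_{kj} − (−1)^k ∂ₓu(0,t). -/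
/-- The shifted Legendre polynomial on `[0,1]`: `L_k(x) = (1/k!) dᵏ/dxᵏ [(x² - x)ᵏ]`. -/
noncomputable def shiftedLegendre (k : ℕ) : ℝ → ℝ :=
  fun x => (1 / (Nat.factorial k : ℝ)) * iteratedDeriv k (fun y => (y ^ 2 - y) ^ k) x

/-- `ℓ_{kj} = (2j+1)(1−(−1)^{k+j})` if `j ≤ k−1`, and `ℓ_{kj} = 0` if `j ≥ k`. -/
noncomputable def ell (k j : ℕ) : ℝ :=
  if j < k then (2 * (j : ℝ) + 1) * (1 - (-1 : ℝ) ^ (k + j)) else 0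

open Polynomial Finset MeasureTheory intervalIntegral Set

/-- The shifted Legendre polynomial as a `Polynomial ℝ`. -/
noncomputable def Rl (k : ℕ) : Polynomial ℝ :=
  Polynomial.C ((Nat.factorial k : ℝ)⁻¹) * Polynomial.derivative^[k] ((X ^ 2 - X) ^ k)

lemma iteratedDeriv_polyEval (k : ℕ) (p : Polynomial ℝ) :
    iteratedDeriv k (fun y => p.eval y) = fun x => (Polynomial.derivative^[k] p).eval x := by
  induction k generalizing p with
  | zero => simp
  | succ n ih =>
    rw [iteratedDeriv_succ', Function.iterate_succ_apply]
    rw [show (deriv fun y => p.eval y) = fun y => (derivative p).eval y from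
      funext fun y => Polynomial.deriv p]
    exact ih _

lemma shiftedLegendre_eq (k : ℕ) (x : ℝ) : shiftedLegendre k x = (Rl k).eval x := by
  unfold _root_.shiftedLegendre
  have h : (fun y : ℝ => (y ^ 2 - y) ^ k) = fun y => ((X ^ 2 - X : Polynomial ℝ) ^ k).eval y := by
    funext y; simp
  rw [h, iteratedDeriv_polyEval, Rl]
  simp [one_div]

lemma dvd_iterate_derivative (a : ℝ) (m : ℕ) (p : Polynomial ℝ) (h : (X - C a) ^ m ∣ p)
    (i : ℕ) (hi : i ≤ m) : (X - C a) ^ (m - i) ∣ Polynomial.derivative^[i] p := by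
  induction i generalizing p m with
  | zero => simpa using h
  | succ n ih =>
    rw [Function.iterate_succ_apply]
    obtain ⟨d, rfl⟩ : ∃ d, m = d + 1 := ⟨m - 1, by omega⟩
    have h1 : (X - C a) ^ d ∣ derivative p := by
      obtain ⟨q, rfl⟩ := h
      rw [derivative_mul, derivative_pow]
      rw [Nat.add_sub_cancel]
      refine dvd_add ?_ ?_
      · exact ((dvd_mul_left _ _).mul_right _).mul_right _
      · exact (pow_dvd_pow _ (by omega)).mul_right _
    have := ih d (derivative p) h1 (by omega)
    rwa [show d - n = d + 1 - (n+1) by omega] at this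

lemma vanish_endpoint (k i : ℕ) (hi : i < k) :
    (Polynomial.derivative^[i] ((X ^ 2 - X : Polynomial ℝ) ^ k)).eval 0 = 0 ∧
    (Polynomial.derivative^[i] ((X ^ 2 - X : Polynomial ℝ) ^ k)).eval 1 = 0 := by
  have hfac : (X ^ 2 - X : Polynomial ℝ) ^ k = (X - C 0) ^ k * (X - C 1) ^ k := by
    rw [← mul_pow]; ring_nf; simp [mul_comm]
  constructor
  · have h0 : (X - C (0:ℝ)) ^ (k - i) ∣ Polynomial.derivative^[i] ((X ^ 2 - X : Polynomial ℝ) ^ k) :=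
      dvd_iterate_derivative 0 k _ ⟨(X - C 1) ^ k, hfac⟩ i (by omega)
    obtain ⟨q, hq⟩ := h0
    rw [hq]; simp [zero_pow (by omega : k - i ≠ 0)]
  · have h1 : (X - C (1:ℝ)) ^ (k - i) ∣ Polynomial.derivative^[i] ((X ^ 2 - X : Polynomial ℝ) ^ k) :=
      dvd_iterate_derivative 1 k _ ⟨(X - C 0) ^ k, by rw [hfac]; ring⟩ i (by omega)
    obtain ⟨q, hq⟩ := h1
    rw [hq]; simp [zero_pow (by omega : k - i ≠ 0)]

lemma eval_leibniz (k : ℕ) :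
    (Polynomial.derivative^[k] ((X ^ 2 - X : Polynomial ℝ) ^ k)).eval 1 = (Nat.factorial k : ℝ) ∧
    (Polynomial.derivative^[k] ((X ^ 2 - X : Polynomial ℝ) ^ k)).eval 0
      = (-1 : ℝ) ^ k * (Nat.factorial k : ℝ) := by
  have hfac : (X ^ 2 - X : Polynomial ℝ) ^ k = (X - C 1) ^ k * X ^ k := by
    rw [← mul_pow]; ring_nf; simp [mul_comm]
  rw [hfac, Polynomial.iterate_derivative_mul]
  have hterm : ∀ i ∈ range (k+1),
      (k.choose i • ((Polynomial.derivative^[k - i] ((X - C 1 : Polynomial ℝ) ^ k))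
          * Polynomial.derivative^[i] (X ^ k : Polynomial ℝ)))
      = k.choose i • ((Nat.descFactorial k (k-i) • (X - C 1 : Polynomial ℝ) ^ (k - (k-i)))
          * (C (Nat.descFactorial k i : ℝ) * X ^ (k - i))) := by
    intro i _
    rw [Polynomial.iterate_derivative_X_sub_pow, Polynomial.iterate_derivative_X_pow_eq_C_mul]
  rw [Finset.sum_congr rfl hterm]
  constructor
  · rw [Polynomial.eval_finset_sum, Finset.sum_eq_single 0]
    · simp [Nat.descFactorial_self]
    · intro i hi hne
      have h1 : k - (k - i) = i := by simp only [Finset.mem_range] at hi; omega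
      rw [h1]
      simp [zero_pow hne]
    · simp
  · rw [Polynomial.eval_finset_sum, Finset.sum_eq_single k]
    · simp [Nat.descFactorial_self, Nat.sub_self]
    · intro i hi hne
      have h1 : k - i ≠ 0 := by simp only [Finset.mem_range] at hi; omega
      simp [zero_pow h1]
    · simp

lemma poly_IBP (p q : Polynomial ℝ) :
    ∫ x in (0:ℝ)..1, (derivative p).eval x * q.eval x
      = p.eval 1 * q.eval 1 - p.eval 0 * q.eval 0
        - ∫ x in (0:ℝ)..1, p.eval x * (derivative q).eval x := by
  have h := intervalIntegral.integral_mul_deriv_eq_deriv_mul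
    (a := (0:ℝ)) (b := 1)
    (u := fun x => q.eval x) (u' := fun x => (derivative q).eval x)
    (v := fun x => p.eval x) (v' := fun x => (derivative p).eval x)
    (fun x _ => q.hasDerivAt x) (fun x _ => p.hasDerivAt x)
    ((derivative q).continuous_aeval.intervalIntegrable _ _)
    ((derivative p).continuous_aeval.intervalIntegrable _ _)
  simp_rw [mul_comm (eval _ q)] at h
  rw [h]; ring_nf
  rw [show (fun x => eval x (derivative q) * eval x p) = fun x => eval x p * eval x (derivative q)
    from funext fun x => mul_comm _ _]

lemma iter_IBP (f : Polynomial ℝ) (n : ℕ)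
    (hv : ∀ i < n, (Polynomial.derivative^[i] f).eval 0 = 0 ∧ (Polynomial.derivative^[i] f).eval 1 = 0)
    (q : Polynomial ℝ) :
    ∫ x in (0:ℝ)..1, (Polynomial.derivative^[n] f).eval x * q.eval x
      = (-1:ℝ)^n * ∫ x in (0:ℝ)..1, f.eval x * (Polynomial.derivative^[n] q).eval x := by
  induction n generalizing q with
  | zero => simp
  | succ n ih =>
    rw [Function.iterate_succ_apply', poly_IBP]
    rw [(hv n (by omega)).1, (hv n (by omega)).2]
    rw [ih (fun i hi => hv i (by omega)) (derivative q)]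
    rw [← Function.iterate_succ_apply]
    ring

lemma beta_nat (b a : ℕ) : ∫ x in (0:ℝ)..1, x ^ a * (1 - x) ^ b
    = (Nat.factorial a * Nat.factorial b : ℝ) / Nat.factorial (a + b + 1) := by
  induction b generalizing a with
  | zero =>
    simp [integral_pow, Nat.factorial_succ]
    rw [eq_div_iff (by positivity)]
    field_simp
  | succ b ih =>
    have h := poly_IBP (X ^ (a+1)) ((C 1 - X) ^ (b+1))
    rw [derivative_X_pow, derivative_pow] at h
    simp only [derivative_sub, derivative_C, derivative_X, zero_sub, eval_mul, eval_pow,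
      eval_sub, eval_C, eval_X, eval_natCast, eval_neg, eval_one, one_pow] at h
    simp only [Nat.add_sub_cancel] at h
    rw [show (fun x:ℝ => (↑(a+1):ℝ) * x ^ a * (1 - x) ^ (b+1))
        = fun x:ℝ => ((a:ℝ)+1) * (x ^ a * (1 - x) ^ (b+1)) from funext fun x => by push_cast; ring,
      show (fun x:ℝ => x ^ (a+1) * ((↑(b+1):ℝ) * (1 - x) ^ b * (-1)))
        = fun x:ℝ => (-((b:ℝ)+1)) * (x ^ (a+1) * (1 - x) ^ b) from funext fun x => by push_cast; ring,
      intervalIntegral.integral_const_mul, intervalIntegral.integral_const_mul] at h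
    rw [ih (a+1)] at h
    have ha : ((a:ℝ)+1) ≠ 0 := by positivity
    norm_num [zero_pow (show b+1 ≠ 0 by omega), zero_pow (show a+1 ≠ 0 by omega)] at h
    have h2 : (∫ x in (0:ℝ)..1, x ^ a * (1 - x) ^ (b+1))
        = (((b:ℝ)+1) * ((a+1).factorial * b.factorial / (a+1+b+1).factorial)) / ((a:ℝ)+1) := by
      rw [eq_div_iff ha]; rw [mul_comm] at h; rw [h]; ring
    rw [h2]
    have e3 : a+1+b+1 = a + b + 2 := by omega
    have e4 : a + (b+1) + 1 = a + b + 2 := by omega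
    rw [e3, e4, Nat.factorial_succ a, Nat.factorial_succ b]
    push_cast
    field_simp

lemma monic_base (k : ℕ) : ((X ^ 2 - X : Polynomial ℝ) ^ k).Monic := by
  apply Polynomial.Monic.pow
  monicity!

lemma natDegree_base (k : ℕ) : ((X ^ 2 - X : Polynomial ℝ) ^ k).natDegree = 2 * k := by
  rw [Polynomial.natDegree_pow]
  have : ((X:Polynomial ℝ) ^ 2 - X).natDegree = 2 := by compute_degree!
  rw [this]; ring

lemma coeff_Rl (k : ℕ) : (Rl k).coeff k = (Nat.choose (2*k) k : ℝ) := by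
  rw [Rl, Polynomial.coeff_C_mul, Polynomial.coeff_iterate_derivative]
  have h1 : (k + k) = 2 * k := by ring
  rw [h1, ← natDegree_base k, (monic_base k).coeff_natDegree]
  rw [nsmul_eq_mul, mul_one, Nat.descFactorial_eq_factorial_mul_choose]
  push_cast
  rw [← mul_assoc, inv_mul_cancel₀ (by positivity : (Nat.factorial k : ℝ) ≠ 0), one_mul]

lemma natDegree_Rl (k : ℕ) : (Rl k).natDegree = k := by
  apply le_antisymm
  · apply (Polynomial.natDegree_C_mul_le _ _).trans
    apply (Polynomial.natDegree_iterate_derivative _ _).trans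
    rw [natDegree_base]; omega
  · apply Polynomial.le_natDegree_of_ne_zero
    rw [coeff_Rl]
    exact_mod_cast (Nat.choose_pos (by omega : k ≤ 2*k)).ne'

lemma integral_Rl_mul (k : ℕ) (q : Polynomial ℝ) :
    ∫ x in (0:ℝ)..1, (Rl k).eval x * q.eval x
      = ((Nat.factorial k : ℝ))⁻¹ * (-1:ℝ)^k
        * ∫ x in (0:ℝ)..1, ((X ^ 2 - X : Polynomial ℝ) ^ k).eval x
            * (Polynomial.derivative^[k] q).eval x := by
  have e : (fun x => (Rl k).eval x * q.eval x)
      = fun x => ((Nat.factorial k : ℝ))⁻¹ *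
          ((Polynomial.derivative^[k] ((X ^ 2 - X : Polynomial ℝ) ^ k)).eval x * q.eval x) := by
    funext x; rw [Rl]; simp; ring
  rw [e, intervalIntegral.integral_const_mul,
    iter_IBP _ k (fun i hi => vanish_endpoint k i hi) q, mul_assoc]

lemma orth_aux (k : ℕ) (q : Polynomial ℝ) (hq : q.natDegree < k) :
    ∫ x in (0:ℝ)..1, (Rl k).eval x * q.eval x = 0 := by
  rw [integral_Rl_mul, Polynomial.iterate_derivative_eq_zero hq]
  simp

lemma integral_base (k : ℕ) : ∫ x in (0:ℝ)..1, ((X ^ 2 - X : Polynomial ℝ) ^ k).eval x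
    = (-1:ℝ)^k * (Nat.factorial k * Nat.factorial k : ℝ) / Nat.factorial (2*k + 1) := by
  have e : (fun x : ℝ => ((X ^ 2 - X : Polynomial ℝ) ^ k).eval x)
      = fun x : ℝ => (-1:ℝ)^k * (x ^ k * (1-x) ^ k) := by
    funext x
    simp only [eval_pow, eval_sub, eval_X]
    rw [show x^2 - x = (-1) * (x * (1-x)) by ring, mul_pow, mul_pow]
  rw [e, intervalIntegral.integral_const_mul, beta_nat]
  rw [show k + k + 1 = 2*k+1 by ring]
  ring

lemma Rl_sq (k : ℕ) : ∫ x in (0:ℝ)..1, (Rl k).eval x * (Rl k).eval x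
    = 1 / (2 * (k:ℝ) + 1) := by
  rw [integral_Rl_mul]
  have hd : Polynomial.derivative^[k] (Rl k)
      = Polynomial.C ((Nat.factorial k : ℝ)⁻¹ * (Nat.factorial (2*k) : ℝ)) := by
    rw [Rl, Polynomial.iterate_derivative_C_mul, ← Function.iterate_add_apply]
    have h2k : k + k = 2 * k := by ring
    rw [h2k]
    have hdeg : (Polynomial.derivative^[2*k] ((X ^ 2 - X : Polynomial ℝ) ^ k)).natDegree = 0 := by
      have := Polynomial.natDegree_iterate_derivative ((X ^ 2 - X : Polynomial ℝ) ^ k) (2*k)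
      rw [natDegree_base] at this; omega
    rw [Polynomial.eq_C_of_natDegree_le_zero hdeg.le, Polynomial.coeff_iterate_derivative]
    rw [show 0 + 2*k = 2*k by ring, ← natDegree_base k, (monic_base k).coeff_natDegree]
    rw [← Polynomial.C_mul]
    congr 1
    rw [nsmul_eq_mul, mul_one, Nat.descFactorial_self]
  rw [hd]
  simp only [eval_C]
  rw [intervalIntegral.integral_mul_const, integral_base]
  have hk : (Nat.factorial k : ℝ) ≠ 0 := by positivity
  have h2k : (Nat.factorial (2*k) : ℝ) ≠ 0 := by positivity
  have h2k1 : (2*(k:ℝ)+1) ≠ 0 := by positivity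
  have hfs : (Nat.factorial (2*k+1) : ℝ) = (2*(k:ℝ)+1) * (Nat.factorial (2*k) : ℝ) := by
    rw [Nat.factorial_succ]; push_cast; ring
  have h1 : ((-1:ℝ)^k) * ((-1:ℝ)^k) = 1 := by
    rw [← mul_pow]; norm_num
  rw [hfs]
  field_simp
  ring_nf
  rw [show k * 2 = 2 * k by ring, pow_mul]
  norm_num

lemma Rl_ne_zero (k : ℕ) : Rl k ≠ 0 := fun h => by
  have := coeff_Rl k
  rw [h] at this
  simp only [Polynomial.coeff_zero] at this
  exact (Nat.cast_ne_zero.mpr (Nat.choose_pos (by omega : k ≤ 2*k)).ne').symm this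

lemma Rl_eval_one (k : ℕ) : (Rl k).eval 1 = 1 := by
  rw [Rl]
  simp only [eval_mul, eval_C, (eval_leibniz k).1]
  exact inv_mul_cancel₀ (by positivity)

lemma Rl_eval_zero (k : ℕ) : (Rl k).eval 0 = (-1:ℝ)^k := by
  rw [Rl]
  simp only [eval_mul, eval_C, (eval_leibniz k).2]
  rw [mul_comm ((-1:ℝ)^k), ← mul_assoc, inv_mul_cancel₀ (by positivity : (Nat.factorial k:ℝ) ≠ 0),
    one_mul]

lemma expand (n : ℕ) : ∀ p : Polynomial ℝ, p.degree < (n : WithBot ℕ) →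
    ∃ c : ℕ → ℝ, p = ∑ j ∈ Finset.range n, Polynomial.C (c j) * Rl j := by
  induction n with
  | zero =>
    intro p hp
    refine ⟨0, ?_⟩
    simp only [Finset.range_zero, Finset.sum_empty]
    by_contra hne
    exact absurd hp (not_lt.2 (Polynomial.zero_le_degree_iff.2 hne))
  | succ n ih =>
    intro p hp
    set a := p.coeff n / (Rl n).coeff n with ha
    have hcoeff : (Rl n).coeff n ≠ 0 := by
      rw [coeff_Rl]; exact Nat.cast_ne_zero.mpr (Nat.choose_pos (by omega : n ≤ 2*n)).ne'
    have hq : (p - Polynomial.C a * Rl n).degree < (n : WithBot ℕ) := by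
      rw [Polynomial.degree_lt_iff_coeff_zero]
      intro m hm
      rw [Polynomial.coeff_sub, Polynomial.coeff_C_mul]
      rcases eq_or_lt_of_le (Nat.cast_le.mp hm : n ≤ m) with h | h
      · subst h
        rw [ha, div_mul_cancel₀ _ hcoeff, sub_self]
      · rw [Polynomial.coeff_eq_zero_of_degree_lt
          (hp.trans_le (by exact_mod_cast Nat.cast_le.mpr h)),
          Polynomial.coeff_eq_zero_of_natDegree_lt (by rw [natDegree_Rl]; omega), mul_zero,
          sub_zero]
    obtain ⟨c, hc⟩ := ih _ hq
    refine ⟨fun j => if j = n then a else c j, ?_⟩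
    rw [Finset.sum_range_succ]
    have : ∑ j ∈ Finset.range n, Polynomial.C (if j = n then a else c j) * Rl j
        = ∑ j ∈ Finset.range n, Polynomial.C (c j) * Rl j := by
      apply Finset.sum_congr rfl
      intro j hj
      rw [if_neg (by simp only [Finset.mem_range] at hj; omega)]
    rw [this, ← hc]
    simp

lemma Rl_orth_pair (i j : ℕ) (hij : i ≠ j) :
    ∫ x in (0:ℝ)..1, (Rl i).eval x * (Rl j).eval x = 0 := by
  rcases Nat.lt_or_ge j i with h | h
  · exact orth_aux i (Rl j) (by rw [natDegree_Rl]; omega)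
  · have := orth_aux j (Rl i) (by rw [natDegree_Rl]; omega)
    rw [← this]
    congr 1
    funext x
    ring

lemma Rl_derivative (k : ℕ) :
    derivative (Rl k) = ∑ j ∈ Finset.range k, Polynomial.C (ell k j) * Rl j := by
  have hdeg : (derivative (Rl k)).degree < (k : WithBot ℕ) := by
    have h1 := Polynomial.degree_derivative_lt (Rl_ne_zero k)
    rwa [Polynomial.degree_eq_natDegree (Rl_ne_zero k), natDegree_Rl] at h1
  obtain ⟨c, hc⟩ := expand k _ hdeg
  have hcell : ∀ j ∈ Finset.range k, Polynomial.C (c j) * Rl j = Polynomial.C (ell k j) * Rl j := by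
    intro j hj
    simp only [Finset.mem_range] at hj
    have ha : ∫ x in (0:ℝ)..1, (derivative (Rl k)).eval x * (Rl j).eval x
        = c j * (1 / (2 * (j:ℝ) + 1)) := by
      rw [hc]
      have e : (fun x => (∑ i ∈ Finset.range k, Polynomial.C (c i) * Rl i).eval x * (Rl j).eval x)
          = fun x => ∑ i ∈ Finset.range k, (c i) * ((Rl i).eval x * (Rl j).eval x) := by
        funext x
        rw [Polynomial.eval_finset_sum, Finset.sum_mul]
        exact Finset.sum_congr rfl fun i _ => by simp [mul_assoc]
      rw [e, intervalIntegral.integral_finset_sum]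
      · rw [Finset.sum_eq_single j]
        · rw [intervalIntegral.integral_const_mul, Rl_sq]
        · intro i hi hne
          rw [intervalIntegral.integral_const_mul, Rl_orth_pair i j hne, mul_zero]
        · intro hj'; exact absurd (Finset.mem_range.mpr hj) hj'
      · intro i _
        exact (continuous_const.mul ((Rl i).continuous_aeval.mul
          ((Rl j).continuous_aeval))).intervalIntegrable _ _
    have hb : ∫ x in (0:ℝ)..1, (derivative (Rl k)).eval x * (Rl j).eval x
        = 1 - (-1:ℝ)^(k+j) := by
      rw [poly_IBP, Rl_eval_one, Rl_eval_one, Rl_eval_zero, Rl_eval_zero,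
        orth_aux k (derivative (Rl j))
          (by
            have := Polynomial.natDegree_derivative_le (Rl j)
            rw [natDegree_Rl] at this
            omega)]
      rw [← pow_add]
      ring
    have hcj : c j = ell k j := by
      have h1 : c j * (1 / (2 * (j:ℝ) + 1)) = 1 - (-1:ℝ)^(k+j) := by rw [← ha, hb]
      rw [ell, if_pos hj]
      have h2 : (2 * (j:ℝ) + 1) ≠ 0 := by positivity
      field_simp at h1
      rw [h1]
    rw [hcj]
  rw [hc]
  exact Finset.sum_congr rfl hcell

lemma master (γ : ℝ)
    (u ut ux uxx : ℝ → ℝ → ℝ)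
    (hut : ∀ x t, HasDerivAt (fun s => u x s) (ut x t) t)
    (hux : ∀ x t, HasDerivAt (fun y => u y t) (ux x t) x)
    (huxx : ∀ x t, HasDerivAt (fun y => ux y t) (uxx x t) x)
    (hutc : Continuous fun p : ℝ × ℝ => ut p.1 p.2)
    (huxc : Continuous fun p : ℝ × ℝ => ux p.1 p.2)
    (huxxc : Continuous fun p : ℝ × ℝ => uxx p.1 p.2)
    (hheat : ∀ t > (0:ℝ), ∀ x ∈ Set.Ioo (0:ℝ) 1, ut x t = γ * uxx x t)
    (t : ℝ) (ht : 0 < t) (φ : Polynomial ℝ) :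
    deriv (fun s => ∫ x in (0:ℝ)..1, u x s * φ.eval x) t
      = γ * (φ.eval 1 * ux 1 t - φ.eval 0 * ux 0 t
          - (derivative φ).eval 1 * u 1 t + (derivative φ).eval 0 * u 0 t
          + ∫ x in (0:ℝ)..1, u x t * (derivative (derivative φ)).eval x) := by
  have hu_cont : ∀ s, Continuous fun x => u x s := fun s =>
    continuous_iff_continuousAt.2 fun x => (hux x s).continuousAt
  have hut_contx : ∀ s, Continuous fun x => ut x s := fun s =>
    hutc.comp (continuous_id.prodMk continuous_const)
  have hux_contx : ∀ s, Continuous fun x => ux x s := fun s =>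
    huxc.comp (continuous_id.prodMk continuous_const)
  have huxx_contx : ∀ s, Continuous fun x => uxx x s := fun s =>
    huxxc.comp (continuous_id.prodMk continuous_const)
  have hK : IsCompact ((Set.Icc (0:ℝ) 1) ×ˢ (Set.Icc (t-1) (t+1))) :=
    isCompact_Icc.prod isCompact_Icc
  obtain ⟨M, hM⟩ := hK.exists_bound_of_continuousOn
    ((hutc.mul (φ.continuous_aeval.comp continuous_fst)).continuousOn)
  have hDer : HasDerivAt (fun s => ∫ x in (0:ℝ)..1, u x s * φ.eval x)
      (∫ x in (0:ℝ)..1, ut x t * φ.eval x) t := by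
    have h := intervalIntegral.hasDerivAt_integral_of_dominated_loc_of_deriv_le
      (F := fun s x => u x s * φ.eval x) (F' := fun s x => ut x s * φ.eval x)
      (x₀ := t) (a := 0) (b := 1) (μ := volume) (bound := fun _ => M)
      (s := Metric.ball t 1) (Metric.ball_mem_nhds t one_pos)
      (Filter.Eventually.of_forall fun s =>
        (((hu_cont s).mul φ.continuous_aeval).aestronglyMeasurable).restrict)
      (((hu_cont t).mul φ.continuous_aeval).intervalIntegrable _ _)
      ((((hut_contx t).mul φ.continuous_aeval).aestronglyMeasurable).restrict)
      (Filter.Eventually.of_forall fun x hx s hs => by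
        have hx' : x ∈ Set.Icc (0:ℝ) 1 := by
          rw [Set.uIoc_of_le (by norm_num : (0:ℝ) ≤ 1)] at hx
          exact ⟨le_of_lt hx.1, hx.2⟩
        have hs' : s ∈ Set.Icc (t-1) (t+1) := by
          rw [Real.ball_eq_Ioo] at hs
          exact ⟨le_of_lt hs.1, le_of_lt hs.2⟩
        exact hM (x, s) ⟨hx', hs'⟩)
      intervalIntegrable_const
      (Filter.Eventually.of_forall fun x _ s _ => (hut x s).mul_const _)
    exact h.2
  rw [hDer.deriv]
  have heq : ∀ x ∈ Set.Icc (0:ℝ) 1, ut x t = γ * uxx x t := by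
    have hclosed : IsClosed {x : ℝ | ut x t = γ * uxx x t} :=
      isClosed_eq (hut_contx t) (continuous_const.mul (huxx_contx t))
    have hIcc : Set.Icc (0:ℝ) 1 = closure (Set.Ioo (0:ℝ) 1) :=
      (closure_Ioo (by norm_num : (0:ℝ) ≠ 1)).symm
    intro x hx
    rw [hIcc] at hx
    exact closure_minimal (fun y hy => hheat t ht y hy) hclosed hx
  have step2 : (∫ x in (0:ℝ)..1, ut x t * φ.eval x)
      = γ * ∫ x in (0:ℝ)..1, φ.eval x * uxx x t := by
    rw [← intervalIntegral.integral_const_mul]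
    apply intervalIntegral.integral_congr
    intro x hx
    rw [Set.uIcc_of_le (by norm_num : (0:ℝ) ≤ 1)] at hx
    show ut x t * φ.eval x = γ * (φ.eval x * uxx x t)
    rw [heq x hx]; ring
  rw [step2]
  have ibp1 : (∫ x in (0:ℝ)..1, φ.eval x * uxx x t)
      = φ.eval 1 * ux 1 t - φ.eval 0 * ux 0 t
        - ∫ x in (0:ℝ)..1, (derivative φ).eval x * ux x t :=
    intervalIntegral.integral_mul_deriv_eq_deriv_mul
      (fun x _ => φ.hasDerivAt x) (fun x _ => huxx x t)
      ((derivative φ).continuous_aeval.intervalIntegrable _ _)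
      ((huxx_contx t).intervalIntegrable _ _)
  have ibp2 : (∫ x in (0:ℝ)..1, (derivative φ).eval x * ux x t)
      = (derivative φ).eval 1 * u 1 t - (derivative φ).eval 0 * u 0 t
        - ∫ x in (0:ℝ)..1, (derivative (derivative φ)).eval x * u x t :=
    intervalIntegral.integral_mul_deriv_eq_deriv_mul
      (fun x _ => (derivative φ).hasDerivAt x) (fun x _ => hux x t)
      ((derivative (derivative φ)).continuous_aeval.intervalIntegrable _ _)
      ((hux_contx t).intervalIntegrable _ _)
  rw [ibp1, ibp2]
  have : (∫ x in (0:ℝ)..1, (derivative (derivative φ)).eval x * u x t)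
      = ∫ x in (0:ℝ)..1, u x t * (derivative (derivative φ)).eval x := by
    apply intervalIntegral.integral_congr
    intro x _
    exact mul_comm _ _
  rw [this]
  ring

/-- time derivative of the Legendre coefficients: for a solution `u(x,t)`
of the heat equation `∂ₜu = γ ∂ₓₓu` on `(0,1)` with `∂ₓu(1,t) = 0` (with continuous
partial derivatives `∂ₜu`, `∂ₓu`, `∂ₓₓu`), for every `t > 0`:
`(1/γ) d/dt ⟨u(·,t), L_0⟩ = −∂ₓu(0,t)`,
`(1/γ) d/dt ⟨u(·,t), L_1⟩ = 2u(0,t) − 2u(1,t) + ∂ₓu(0,t)`, and for `k ≥ 2`,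
`(1/γ) d/dt ⟨u(·,t), L_k⟩ = Σ_{j=1}^{k−1} Σ_{i=0}^{j−1} ℓ_{kj} ℓ_{ji} ⟨u(·,t), L_i⟩
  + u(0,t) Σ_{j<k} ℓ_{kj}(−1)^j − u(1,t) Σ_{j<k} ℓ_{kj} − (−1)^k ∂ₓu(0,t)`. -/
theorem legendre_coeff_time_deriv (γ : ℝ) (hγ : 0 < γ)
    (u ut ux uxx : ℝ → ℝ → ℝ)
    (hut : ∀ x t, HasDerivAt (fun s => u x s) (ut x t) t)
    (hux : ∀ x t, HasDerivAt (fun y => u y t) (ux x t) x)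
    (huxx : ∀ x t, HasDerivAt (fun y => ux y t) (uxx x t) x)
    (hutc : Continuous fun p : ℝ × ℝ => ut p.1 p.2)
    (huxc : Continuous fun p : ℝ × ℝ => ux p.1 p.2)
    (huxxc : Continuous fun p : ℝ × ℝ => uxx p.1 p.2)
    (hheat : ∀ t > (0:ℝ), ∀ x ∈ Set.Ioo (0:ℝ) 1, ut x t = γ * uxx x t)
    (hneu : ∀ t > (0:ℝ), ux 1 t = 0)
    (t : ℝ) (ht : 0 < t) :
    ((1 / γ) * deriv (fun s => ∫ x in (0:ℝ)..1, u x s * shiftedLegendre 0 x) t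
        = -(ux 0 t)) ∧
    ((1 / γ) * deriv (fun s => ∫ x in (0:ℝ)..1, u x s * shiftedLegendre 1 x) t
        = 2 * u 0 t - 2 * u 1 t + ux 0 t) ∧
    (∀ k : ℕ, 2 ≤ k →
      (1 / γ) * deriv (fun s => ∫ x in (0:ℝ)..1, u x s * shiftedLegendre k x) t
        = (∑ j ∈ Finset.Ico 1 k, ∑ i ∈ Finset.range j,
            ell k j * ell j i * ∫ x in (0:ℝ)..1, u x t * shiftedLegendre i x)
          + u 0 t * (∑ j ∈ Finset.range k, ell k j * (-1 : ℝ) ^ j)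
          - u 1 t * (∑ j ∈ Finset.range k, ell k j)
          - (-1 : ℝ) ^ k * ux 0 t) := by
  have hgne : γ ≠ 0 := hγ.ne'
  have hux1 : ux 1 t = 0 := hneu t ht
  have hu_cont : ∀ s, Continuous fun x => u x s := fun s =>
    continuous_iff_continuousAt.2 fun x => (hux x s).continuousAt
  simp only [shiftedLegendre_eq]
  have hmaster := master γ u ut ux uxx hut hux huxx hutc huxc huxxc hheat t ht
  refine ⟨?_, ?_, ?_⟩
  · -- k = 0
    have h0 : derivative (Rl 0) = 0 := by
      rw [Rl]; simp
    rw [hmaster (Rl 0), Rl_eval_one, Rl_eval_zero, h0, hux1]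
    simp only [derivative_zero, eval_zero, mul_zero, intervalIntegral.integral_zero, pow_zero]
    field_simp
    ring
  · -- k = 1
    have hd1 : derivative (Rl 1) = Polynomial.C 2 := by
      rw [Rl]
      simp [derivative_pow]
    rw [hmaster (Rl 1), Rl_eval_one, Rl_eval_zero, hd1, hux1]
    simp only [derivative_C, eval_zero, mul_zero, intervalIntegral.integral_zero, eval_C, pow_one]
    field_simp
    ring
  · -- k ≥ 2
    intro k hk
    rw [hmaster (Rl k), Rl_eval_one, Rl_eval_zero, hux1]
    have heval1 : (derivative (Rl k)).eval 1 = ∑ j ∈ Finset.range k, ell k j := by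
      rw [Rl_derivative, Polynomial.eval_finset_sum]
      exact Finset.sum_congr rfl fun j _ => by simp [Rl_eval_one]
    have heval0 : (derivative (Rl k)).eval 0
        = ∑ j ∈ Finset.range k, ell k j * (-1:ℝ)^j := by
      rw [Rl_derivative, Polynomial.eval_finset_sum]
      exact Finset.sum_congr rfl fun j _ => by simp [Rl_eval_zero]
    have hsecond : derivative (derivative (Rl k))
        = ∑ j ∈ Finset.range k, Polynomial.C (ell k j)
            * (∑ i ∈ Finset.range j, Polynomial.C (ell j i) * Rl i) := by
      rw [Rl_derivative k, derivative_sum]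
      exact Finset.sum_congr rfl fun j _ => by
        rw [derivative_C_mul, Rl_derivative j]
    have hint : (∫ x in (0:ℝ)..1, u x t * (derivative (derivative (Rl k))).eval x)
        = ∑ j ∈ Finset.range k, ∑ i ∈ Finset.range j,
            ell k j * ell j i * ∫ x in (0:ℝ)..1, u x t * (Rl i).eval x := by
      rw [hsecond]
      have e : (fun x => u x t * (∑ j ∈ Finset.range k, Polynomial.C (ell k j)
            * (∑ i ∈ Finset.range j, Polynomial.C (ell j i) * Rl i)).eval x)
          = fun x => ∑ j ∈ Finset.range k, ∑ i ∈ Finset.range j,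
              (ell k j * ell j i) * (u x t * (Rl i).eval x) := by
        funext x
        rw [Polynomial.eval_finset_sum, Finset.mul_sum]
        refine Finset.sum_congr rfl fun j _ => ?_
        rw [Polynomial.eval_mul, Polynomial.eval_C, Polynomial.eval_finset_sum, Finset.mul_sum,
          Finset.mul_sum]
        refine Finset.sum_congr rfl fun i _ => ?_
        rw [Polynomial.eval_mul, Polynomial.eval_C]
        ring
      rw [e, intervalIntegral.integral_finset_sum]
      · refine Finset.sum_congr rfl fun j _ => ?_
        rw [intervalIntegral.integral_finset_sum]
        · exact Finset.sum_congr rfl fun i _ => intervalIntegral.integral_const_mul _ _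
        · intro i _
          exact (continuous_const.mul ((hu_cont t).mul
            (Rl i).continuous_aeval)).intervalIntegrable _ _
      · intro j _
        apply Continuous.intervalIntegrable
        exact continuous_finset_sum _ fun i _ =>
          continuous_const.mul ((hu_cont t).mul (Rl i).continuous_aeval)
    rw [heval1, heval0, hint]
    have hIco : (∑ j ∈ Finset.range k, ∑ i ∈ Finset.range j,
            ell k j * ell j i * ∫ x in (0:ℝ)..1, u x t * (Rl i).eval x)
        = ∑ j ∈ Finset.Ico 1 k, ∑ i ∈ Finset.range j,
            ell k j * ell j i * ∫ x in (0:ℝ)..1, u x t * (Rl i).eval x := by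
      rw [Finset.range_eq_Ico, Finset.sum_eq_sum_Ico_succ_bot (by omega : 0 < k)]
      simp
    rw [hIco]
    field_simp
    ring
end

section
/- (Energy derivative identity) Let (X,u) be a classical solution of the coupled ODE–heat system (with in addition ∂ₜₓu continuous), and define E(t) = |X(t)|² + ∫₀¹ u(x,t)² dx + ∫₀¹ (∂ₓu(x,t))² dx. Then for all t > 0, Ė(t) = X(t)ᵀ(Aᵀ + A)X(t) + 2 u(1,t) BᵀX(t) − 2γ ∫₀¹ (∂ₓu(x,t))² dx − 2 ∂ₓu(0,t)(γC + CA)X(t) − 2 ∂ₓu(0,t) C B u(1,t) − 2γ ∫₀¹ (∂ₓₓu(x,t))² dx. -/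
open Matrix MeasureTheory intervalIntegral Set

/-- Differentiation under the interval integral, for jointly continuous data. -/
lemma param_hasDerivAt (F F' : ℝ → ℝ → ℝ)
    (hd : ∀ x s, HasDerivAt (fun s => F x s) (F' x s) s)
    (hFc : Continuous fun p : ℝ × ℝ => F p.1 p.2)
    (hF'c : Continuous fun p : ℝ × ℝ => F' p.1 p.2)
    (a b t : ℝ) :
    HasDerivAt (fun s => ∫ x in a..b, F x s) (∫ x in a..b, F' x t) t := by
  obtain ⟨M, hM⟩ := ((isCompact_uIcc (a := a) (b := b)).prod (isCompact_Icc (a := t - 1) (b := t + 1))).exists_bound_of_continuousOn hF'c.continuousOn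
  refine (intervalIntegral.hasDerivAt_integral_of_dominated_loc_of_deriv_le
    (F := fun s x => F x s) (F' := fun s x => F' x s) (bound := fun _ => M)
    (Metric.ball_mem_nhds t zero_lt_one) ?_ ?_ ?_ ?_ ?_ ?_).2
  · exact Filter.Eventually.of_forall fun s =>
      (hFc.comp (continuous_id.prodMk continuous_const)).aestronglyMeasurable
  · exact (hFc.comp (continuous_id.prodMk continuous_const)).intervalIntegrable a b
  · exact (hF'c.comp (continuous_id.prodMk continuous_const)).aestronglyMeasurable
  · refine Filter.Eventually.of_forall fun x hx s hs => ?_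
    have : (x, s) ∈ Set.uIcc a b ×ˢ Set.Icc (t - 1) (t + 1) := by
      constructor
      · exact Set.uIoc_subset_uIcc hx
      · rw [Metric.mem_ball, Real.dist_eq] at hs
        have := abs_lt.1 hs
        constructor <;> simp <;> linarith [this.1, this.2]
    simpa using hM _ this
  · exact intervalIntegrable_const
  · exact Filter.Eventually.of_forall fun x _ s _ => hd x s

lemma u_jointly_continuous (u ut ux : ℝ → ℝ → ℝ)
    (hut : ∀ x t, HasDerivAt (fun s => u x s) (ut x t) t)
    (hux : ∀ x t, HasDerivAt (fun y => u y t) (ux x t) x)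
    (hutc : Continuous fun p : ℝ × ℝ => ut p.1 p.2) :
    Continuous fun p : ℝ × ℝ => u p.1 p.2 := by
  have rep : ∀ x s, u x s = u x 0 + ∫ r in (0:ℝ)..s, ut x r := by
    intro x s
    rw [intervalIntegral.integral_eq_sub_of_hasDerivAt (fun r _ => hut x r)
      ((hutc.comp (continuous_const.prodMk continuous_id)).intervalIntegrable 0 s)]
    ring
  have c1 : Continuous fun x : ℝ => u x 0 :=
    continuous_iff_continuousAt.2 fun x => (hux x 0).continuousAt
  have c2 : Continuous fun p : ℝ × ℝ => ∫ r in (0:ℝ)..p.2, ut p.1 r :=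
    intervalIntegral.continuous_parametric_primitive_of_continuous hutc
  have : (fun p : ℝ × ℝ => u p.1 p.2)
      = fun p => u p.1 0 + ∫ r in (0:ℝ)..p.2, ut p.1 r := funext fun p => rep p.1 p.2
  rw [this]; exact (c1.comp continuous_fst).add c2

lemma ut_hasDerivAt_x (u ut ux utx : ℝ → ℝ → ℝ)
    (hut : ∀ x t, HasDerivAt (fun s => u x s) (ut x t) t)
    (hux : ∀ x t, HasDerivAt (fun y => u y t) (ux x t) x)
    (hutx : ∀ x t, HasDerivAt (fun s => ux x s) (utx x t) t)
    (huxc : Continuous fun p : ℝ × ℝ => ux p.1 p.2)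
    (hutxc : Continuous fun p : ℝ × ℝ => utx p.1 p.2)
    (x t : ℝ) : HasDerivAt (fun y => ut y t) (utx x t) x := by
  have key : ∀ y s, u y s - u 0 s = ∫ z in (0:ℝ)..y, ux z s := by
    intro y s
    rw [intervalIntegral.integral_eq_sub_of_hasDerivAt (fun z _ => hux z s)
      ((huxc.comp (continuous_id.prodMk continuous_const)).intervalIntegrable 0 y)]
  have key2 : ∀ y, ut y t = ut 0 t + ∫ z in (0:ℝ)..y, utx z t := by
    intro y
    have h1 : HasDerivAt (fun s => u y s - u 0 s) (ut y t - ut 0 t) t := (hut y t).sub (hut 0 t)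
    have h2 : HasDerivAt (fun s => ∫ z in (0:ℝ)..y, ux z s) (∫ z in (0:ℝ)..y, utx z t) t :=
      param_hasDerivAt _ _ hutx huxc hutxc 0 y t
    have h3 : HasDerivAt (fun s => u y s - u 0 s) (∫ z in (0:ℝ)..y, utx z t) t :=
      h2.congr_of_eventuallyEq (Filter.Eventually.of_forall fun s => key y s)
    have := h1.unique h3
    linarith
  have h4 : HasDerivAt (fun y => ut 0 t + ∫ z in (0:ℝ)..y, utx z t) (utx x t) x :=
    (((hutxc.comp (continuous_id.prodMk continuous_const)).integral_hasStrictDerivAt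
      0 x).hasDerivAt).const_add _
  exact h4.congr_of_eventuallyEq (Filter.Eventually.of_forall fun y => key2 y)

/-- energy derivative identity: along a classical solution `(X,u)` of the
coupled ODE–heat system (with `∂ₜₓu` continuous), the energy
`E(t) = |X(t)|² + ∫₀¹ u² + ∫₀¹ (∂ₓu)²` satisfies
`Ė = Xᵀ(Aᵀ+A)X + 2u(1)BᵀX − 2γ‖∂ₓu‖² − 2∂ₓu(0)(γC+CA)X − 2∂ₓu(0)CBu(1) − 2γ‖∂ₓₓu‖²`. -/
theorem energy_derivative {n : ℕ} (A : Matrix (Fin n) (Fin n) ℝ)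
    (B : Matrix (Fin n) (Fin 1) ℝ) (C : Matrix (Fin 1) (Fin n) ℝ)
    (γ : ℝ) (hγ : 0 < γ)
    (X : ℝ → Fin n → ℝ) (u ut ux uxx utx : ℝ → ℝ → ℝ)
    (hX : ContDiff ℝ 1 X)
    (hODE : ∀ t > (0:ℝ), HasDerivAt X (A.mulVec (X t) + fun i => B i 0 * u 1 t) t)
    (hut : ∀ x t, HasDerivAt (fun s => u x s) (ut x t) t)
    (hux : ∀ x t, HasDerivAt (fun y => u y t) (ux x t) x)
    (huxx : ∀ x t, HasDerivAt (fun y => ux y t) (uxx x t) x)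
    (hutx : ∀ x t, HasDerivAt (fun s => ux x s) (utx x t) t)
    (hutc : Continuous fun p : ℝ × ℝ => ut p.1 p.2)
    (huxc : Continuous fun p : ℝ × ℝ => ux p.1 p.2)
    (huxxc : Continuous fun p : ℝ × ℝ => uxx p.1 p.2)
    (hutxc : Continuous fun p : ℝ × ℝ => utx p.1 p.2)
    (hheat : ∀ t > (0:ℝ), ∀ x ∈ Set.Ioo (0:ℝ) 1, ut x t = γ * uxx x t)
    (hdir : ∀ t > (0:ℝ), u 0 t = C.mulVec (X t) 0)
    (hneu : ∀ t > (0:ℝ), ux 1 t = 0)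
    (t : ℝ) (ht : 0 < t) :
    deriv (fun s => (∑ i, (X s i) ^ 2) + (∫ x in (0:ℝ)..1, (u x s) ^ 2)
        + ∫ x in (0:ℝ)..1, (ux x s) ^ 2) t
      = X t ⬝ᵥ (Aᵀ + A).mulVec (X t)
        + 2 * u 1 t * (∑ i, B i 0 * X t i)
        - 2 * γ * (∫ x in (0:ℝ)..1, (ux x t) ^ 2)
        - 2 * ux 0 t * (∑ j, (γ * C 0 j + (C * A) 0 j) * X t j)
        - 2 * ux 0 t * ((C * B) 0 0) * u 1 t
        - 2 * γ * ∫ x in (0:ℝ)..1, (uxx x t) ^ 2 := by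
  set V : Fin n → ℝ := A.mulVec (X t) + fun i => B i 0 * u 1 t with hV
  have hXd : HasDerivAt X V t := hODE t ht
  have hXi : ∀ i, HasDerivAt (fun s => X s i) (V i) t := by
    intro i
    have := (ContinuousLinearMap.proj (R := ℝ) (φ := fun _ : Fin n => ℝ) i
      ).hasFDerivAt.comp_hasDerivAt t hXd
    exact this
  have hucont : Continuous fun p : ℝ × ℝ => u p.1 p.2 :=
    u_jointly_continuous u ut ux hut hux hutc
  have cux : Continuous fun x => ux x t := huxc.comp (continuous_id.prodMk continuous_const)
  have cuxx : Continuous fun x => uxx x t := huxxc.comp (continuous_id.prodMk continuous_const)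
  have cut : Continuous fun x => ut x t := hutc.comp (continuous_id.prodMk continuous_const)
  have cutx : Continuous fun x => utx x t := hutxc.comp (continuous_id.prodMk continuous_const)
  -- derivative of the three terms
  have h1 : HasDerivAt (fun s => ∑ i, X s i ^ 2) (∑ i, 2 * X t i * V i) t := by
    refine HasDerivAt.fun_sum fun i _ => ?_
    simpa [mul_comm, mul_assoc] using (hXi i).fun_pow 2
  have h2 : HasDerivAt (fun s => ∫ x in (0:ℝ)..1, u x s ^ 2)
      (∫ x in (0:ℝ)..1, 2 * u x t * ut x t) t := by
    refine param_hasDerivAt (fun x s => u x s ^ 2) (fun x s => 2 * u x s * ut x s)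
      (fun x s => by simpa [mul_comm, mul_assoc] using (hut x s).fun_pow 2)
      (hucont.pow 2) ?_ 0 1 t
    exact (continuous_const.mul hucont).mul hutc
  have h3 : HasDerivAt (fun s => ∫ x in (0:ℝ)..1, ux x s ^ 2)
      (∫ x in (0:ℝ)..1, 2 * ux x t * utx x t) t := by
    refine param_hasDerivAt (fun x s => ux x s ^ 2) (fun x s => 2 * ux x s * utx x s)
      (fun x s => by simpa [mul_comm, mul_assoc] using (hutx x s).fun_pow 2)
      (huxc.pow 2) ?_ 0 1 t
    exact (continuous_const.mul huxc).mul hutxc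
  have hD : deriv (fun s => (∑ i, (X s i) ^ 2) + (∫ x in (0:ℝ)..1, (u x s) ^ 2)
        + ∫ x in (0:ℝ)..1, (ux x s) ^ 2) t
      = (∑ i, 2 * X t i * V i) + (∫ x in (0:ℝ)..1, 2 * u x t * ut x t)
        + ∫ x in (0:ℝ)..1, 2 * ux x t * utx x t := ((h1.add h2).add h3).deriv
  -- a.e. version of the heat equation on the interval
  have hae : ∀ᵐ x : ℝ, x ≠ (1:ℝ) := by
    rw [MeasureTheory.ae_iff]
    simp only [not_not, Set.setOf_eq_eq_singleton]
    exact Real.volume_singleton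
  have heatae : ∀ᵐ x : ℝ, x ∈ Set.uIoc (0:ℝ) 1 → ut x t = γ * uxx x t := by
    filter_upwards [hae] with x hx1 hx
    rw [Set.uIoc_of_le (by norm_num : (0:ℝ) ≤ 1)] at hx
    exact hheat t ht x ⟨hx.1, lt_of_le_of_ne hx.2 hx1⟩
  -- second term
  have I2a : (∫ x in (0:ℝ)..1, 2 * u x t * ut x t)
      = 2 * γ * ∫ x in (0:ℝ)..1, u x t * uxx x t := by
    rw [← intervalIntegral.integral_const_mul]
    apply intervalIntegral.integral_congr_ae
    filter_upwards [heatae] with x hx hmem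
    rw [hx hmem]; ring
  have I2b : (∫ x in (0:ℝ)..1, u x t * uxx x t)
      = u 1 t * ux 1 t - u 0 t * ux 0 t - ∫ x in (0:ℝ)..1, ux x t * ux x t :=
    intervalIntegral.integral_mul_deriv_eq_deriv_mul
      (fun x _ => hux x t) (fun x _ => huxx x t)
      (cux.intervalIntegrable 0 1) (cuxx.intervalIntegrable 0 1)
  -- third term
  have I3a : (∫ x in (0:ℝ)..1, 2 * ux x t * utx x t)
      = 2 * ∫ x in (0:ℝ)..1, ux x t * utx x t := by
    rw [← intervalIntegral.integral_const_mul]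
    congr 1; funext x; ring
  have I3b : (∫ x in (0:ℝ)..1, ux x t * utx x t)
      = ux 1 t * ut 1 t - ux 0 t * ut 0 t - ∫ x in (0:ℝ)..1, uxx x t * ut x t :=
    intervalIntegral.integral_mul_deriv_eq_deriv_mul
      (fun x _ => huxx x t)
      (fun x _ => ut_hasDerivAt_x u ut ux utx hut hux hutx huxc hutxc x t)
      (cuxx.intervalIntegrable 0 1) (cutx.intervalIntegrable 0 1)
  have I3c : (∫ x in (0:ℝ)..1, uxx x t * ut x t)
      = γ * ∫ x in (0:ℝ)..1, uxx x t ^ 2 := by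
    rw [← intervalIntegral.integral_const_mul]
    apply intervalIntegral.integral_congr_ae
    filter_upwards [heatae] with x hx hmem
    rw [hx hmem]; ring
  have Isq : (∫ x in (0:ℝ)..1, ux x t * ux x t) = ∫ x in (0:ℝ)..1, ux x t ^ 2 := by
    congr 1; funext x; ring
  -- time derivative at the Dirichlet boundary
  have hCd : HasDerivAt (fun s => (C.mulVec (X s)) 0) ((C.mulVec V) 0) t := by
    simp only [Matrix.mulVec, dotProduct]
    exact HasDerivAt.fun_sum fun j _ => (hXi j).const_mul _
  have hu0 : HasDerivAt (fun s => u 0 s) ((C.mulVec V) 0) t := by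
    apply hCd.congr_of_eventuallyEq
    filter_upwards [Ioi_mem_nhds ht] with s hs
    exact hdir s hs
  have hut0 : ut 0 t = (C.mulVec V) 0 := (hut 0 t).unique hu0
  rw [hD, I2a, I2b, I3a, I3b, I3c, Isq, hneu t ht, hdir t ht, hut0]
  have hCχ : (C *ᵥ X t) 0 = ∑ j, C 0 j * X t j := by
    simp [Matrix.mulVec, dotProduct]
  have hb : (C *ᵥ fun i => B i 0 * u 1 t) 0 = (C * B) 0 0 * u 1 t := by
    simp [Matrix.mulVec, dotProduct, Matrix.mul_apply, Finset.sum_mul, mul_assoc]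
  have hCV : (C *ᵥ V) 0 = (∑ j, (C * A) 0 j * X t j) + (C * B) 0 0 * u 1 t := by
    rw [hV, Matrix.mulVec_add, Pi.add_apply, hb, Matrix.mulVec_mulVec]
    simp [Matrix.mulVec, dotProduct]
  have hsum1 : ∑ i, 2 * X t i * V i
      = X t ⬝ᵥ (Aᵀ + A) *ᵥ X t + 2 * u 1 t * ∑ i, B i 0 * X t i := by
    have hT : X t ⬝ᵥ Aᵀ *ᵥ X t = X t ⬝ᵥ A *ᵥ X t := by
      rw [dotProduct_mulVec, Matrix.vecMul_transpose, dotProduct_comm]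
    rw [Matrix.add_mulVec, dotProduct_add, hT]
    simp only [hV, dotProduct, Pi.add_apply]
    rw [Finset.mul_sum, ← Finset.sum_add_distrib, ← Finset.sum_add_distrib]
    exact Finset.sum_congr rfl fun i _ => by ring
  have hsplit : ∑ j, (γ * C 0 j + (C * A) 0 j) * X t j
      = γ * (∑ j, C 0 j * X t j) + ∑ j, (C * A) 0 j * X t j := by
    rw [Finset.mul_sum, ← Finset.sum_add_distrib]
    exact Finset.sum_congr rfl fun j _ => by ring
  rw [hsum1, hCV, hCχ, hsplit]
  ring
end

section
/- (Bessel bound for the spatial derivative in projected coordinates) Let u : [0,1] → ℝ be continuously differentiable and N ∈ ℕ. Then ∫₀¹ (u'(x))² dx ≥ Σ_{k=0}^{N+1} (2k+1) · ( u(1) − (−1)^k u(0) − Σ_{j=0}^{k−1} ℓ_{kj} ⟨u, L_j⟩ )². -/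
open Polynomial intervalIntegral MeasureTheory

namespace BesselAux

/-- The Rodrigues numerator. -/
noncomputable def W (k : ℕ) : ℝ[X] := (X ^ 2 - X) ^ k

/-- The shifted Legendre polynomial as a `Polynomial`. -/
noncomputable def P (k : ℕ) : ℝ[X] := C (1 / (Nat.factorial k : ℝ)) * derivative^[k] (W k)

lemma W_eq (k : ℕ) : W k = (X * (X - C 1)) ^ k := by
  unfold W; congr 1; rw [C_1]; ring

lemma monic_W (k : ℕ) : (W k).Monic := by
  rw [W_eq]; exact (monic_X.mul (monic_X_sub_C 1)).pow k

lemma natDegree_W (k : ℕ) : (W k).natDegree = 2 * k := by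
  rw [W_eq]
  have h : (X * (X - C (1:ℝ))).natDegree = 2 := by
    rw [natDegree_mul X_ne_zero (X_sub_C_ne_zero 1), natDegree_X, natDegree_X_sub_C]
  rw [(monic_X.mul (monic_X_sub_C (1:ℝ))).natDegree_pow, h, Nat.mul_comm]

lemma coeff_D_W (k : ℕ) : (derivative^[k] (W k)).coeff k = ((2 * k).descFactorial k : ℝ) := by
  rw [coeff_iterate_derivative]
  have : k + k = 2 * k := by ring
  rw [this]
  have : (W k).coeff (2 * k) = 1 := by
    have := (monic_W k).leadingCoeff
    rwa [Polynomial.leadingCoeff, natDegree_W] at this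
  simp [this]

lemma natDegree_D_W (k : ℕ) : (derivative^[k] (W k)).natDegree ≤ k := by
  have := natDegree_iterate_derivative (W k) k
  rwa [natDegree_W, Nat.two_mul, Nat.add_sub_cancel] at this

lemma D2k_W (k : ℕ) : derivative^[2 * k] (W k) = C (((2 * k).factorial : ℝ)) := by
  have h : (derivative^[2 * k] (W k)).natDegree ≤ 0 := by
    have := natDegree_iterate_derivative (W k) (2 * k)
    rwa [natDegree_W, Nat.sub_self] at this
  rw [eq_C_of_natDegree_le_zero h, coeff_iterate_derivative]
  have : (W k).coeff (2 * k) = 1 := by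
    have := (monic_W k).leadingCoeff
    rwa [Polynomial.leadingCoeff, natDegree_W] at this
  simp [this, Nat.descFactorial_self]

lemma pow_dvd_D_W (k m : ℕ) (h : m ≤ k) : (X ^ 2 - X : ℝ[X]) ^ (k - m) ∣ derivative^[m] (W k) := by
  induction m with
  | zero => simpa [W] using dvd_rfl
  | succ m ih =>
    obtain ⟨r, hr⟩ := ih (Nat.le_of_succ_le h)
    rw [Function.iterate_succ_apply', hr, derivative_mul, derivative_pow]
    have hkm : k - m = (k - (m + 1)) + 1 := by omega
    apply dvd_add
    · exact (((pow_dvd_pow _ (by omega : k - (m+1) ≤ k - m - 1)).mul_left _).mul_right _).mul_right r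
    · exact (pow_dvd_pow _ (by omega : k - (m+1) ≤ k - m)).mul_right _

lemma D_W_eval_zero (k m : ℕ) (h : m < k) : (derivative^[m] (W k)).eval 0 = 0 := by
  obtain ⟨r, hr⟩ := pow_dvd_D_W k m h.le
  rw [hr, eval_mul, eval_pow]
  have : k - m ≠ 0 := by omega
  simp [zero_pow this]

lemma D_W_eval_one (k m : ℕ) (h : m < k) : (derivative^[m] (W k)).eval 1 = 0 := by
  obtain ⟨r, hr⟩ := pow_dvd_D_W k m h.le
  rw [hr, eval_mul, eval_pow]
  have : k - m ≠ 0 := by omega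
  simp [zero_pow this]


/-- Inner product of two polynomials over `[0,1]`. -/
noncomputable def ip (p q : ℝ[X]) : ℝ := ∫ x in (0:ℝ)..1, p.eval x * q.eval x

lemma integ (p : ℝ[X]) : IntervalIntegrable (fun x => p.eval x) volume 0 1 :=
  p.continuous.intervalIntegrable 0 1

lemma integ_mul (p q : ℝ[X]) :
    IntervalIntegrable (fun x => p.eval x * q.eval x) volume 0 1 :=
  (p.continuous.mul q.continuous).intervalIntegrable 0 1

lemma ip_comm (p q : ℝ[X]) : ip p q = ip q p := by
  unfold ip; congr 1; ext x; ring

/-- Integration by parts for polynomials on `[0,1]`. -/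
lemma ibp (p q : ℝ[X]) :
    ∫ x in (0:ℝ)..1, (derivative p).eval x * q.eval x
      = p.eval 1 * q.eval 1 - p.eval 0 * q.eval 0
        - ∫ x in (0:ℝ)..1, p.eval x * (derivative q).eval x := by
  have h := integral_mul_deriv_eq_deriv_mul
    (u := fun x => q.eval x) (v := fun x => p.eval x)
    (u' := fun x => (derivative q).eval x) (v' := fun x => (derivative p).eval x)
    (fun x _ => q.hasDerivAt x) (fun x _ => p.hasDerivAt x)
    (integ _) (integ _)
  have h1 : ∫ x in (0:ℝ)..1, (derivative p).eval x * q.eval x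
      = ∫ x in (0:ℝ)..1, q.eval x * (derivative p).eval x := by
    congr 1; ext x; ring
  have h2 : ∫ x in (0:ℝ)..1, p.eval x * (derivative q).eval x
      = ∫ x in (0:ℝ)..1, (derivative q).eval x * p.eval x := by
    congr 1; ext x; ring
  rw [h1, h, h2]; ring

/-- Repeated integration by parts against the Rodrigues numerator. -/
lemma key (k : ℕ) (q : ℝ[X]) : ∀ i, i ≤ k →
    (∫ x in (0:ℝ)..1, (derivative^[k] (W k)).eval x * q.eval x)
      = (-1 : ℝ) ^ i * ∫ x in (0:ℝ)..1,
          (derivative^[k - i] (W k)).eval x * (derivative^[i] q).eval x := by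
  intro i
  induction i with
  | zero => simp
  | succ i ih =>
    intro hik
    rw [ih (Nat.le_of_succ_le hik)]
    have hs : k - i = (k - (i + 1)) + 1 := by omega
    have : (∫ x in (0:ℝ)..1, (derivative^[k - i] (W k)).eval x * (derivative^[i] q).eval x)
        = - ∫ x in (0:ℝ)..1,
            (derivative^[k - (i+1)] (W k)).eval x * (derivative^[i+1] q).eval x := by
      have hD : derivative^[k - i] (W k) = derivative (derivative^[k - (i+1)] (W k)) := by
        rw [hs, Function.iterate_succ_apply']
      rw [hD, ibp, D_W_eval_zero k _ (by omega), D_W_eval_one k _ (by omega),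
        show derivative (derivative^[i] q) = derivative^[i+1] q from
          (Function.iterate_succ_apply' _ _ _).symm]
      ring
    rw [this, pow_succ]; ring

lemma ip_P_eq (k : ℕ) (q : ℝ[X]) :
    ip (P k) q = (1 / (Nat.factorial k : ℝ)) * ∫ x in (0:ℝ)..1,
        (derivative^[k] (W k)).eval x * q.eval x := by
  unfold ip P
  rw [← intervalIntegral.integral_const_mul]
  congr 1; ext x; simp; ring

/-- Orthogonality to lower-degree polynomials. -/
lemma orth_lower (k : ℕ) (q : ℝ[X]) (hq : q.natDegree < k) : ip (P k) q = 0 := by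
  rw [ip_P_eq, key k q k le_rfl, iterate_derivative_eq_zero hq]
  simp

lemma beta_int (b : ℕ) : ∀ a : ℕ, (∫ x in (0:ℝ)..1, x ^ a * (1 - x) ^ b)
    = (Nat.factorial a * Nat.factorial b : ℝ) / (Nat.factorial (a + b + 1)) := by
  induction b with
  | zero =>
    intro a
    simp only [pow_zero, mul_one, integral_pow, Nat.add_zero, Nat.factorial_zero, Nat.cast_one,
      one_pow, zero_pow (Nat.succ_ne_zero a), sub_zero, Nat.factorial_succ]
    rw [div_eq_div_iff (by positivity) (by positivity)]
    push_cast; ring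
  | succ b ih =>
    intro a
    have ha1 : ((a:ℝ) + 1) ≠ 0 := by positivity
    have h := integral_mul_deriv_eq_deriv_mul (a := (0:ℝ)) (b := 1)
      (u := fun x => (1 - x) ^ (b + 1)) (v := fun x => x ^ (a + 1) / ((a:ℝ) + 1))
      (u' := fun x => -((b:ℝ) + 1) * (1 - x) ^ b) (v' := fun x => x ^ a)
      (fun x _ => by
        have : HasDerivAt (fun x : ℝ => (1 - x) ^ (b + 1))
            (((b:ℝ) + 1) * (1 - x) ^ b * (-1)) x :=
          (HasDerivAt.fun_pow ((hasDerivAt_id x).const_sub 1) (b+1)).congr_deriv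
            (by simp only [id_eq]; push_cast; ring)
        exact this.congr_deriv (by ring))
      (fun x _ => by
        exact ((hasDerivAt_pow (a+1) x).div_const _).congr_deriv
          (by field_simp; rw [Nat.add_sub_cancel]; push_cast; ring))
      (Continuous.intervalIntegrable (by continuity) 0 1)
      (Continuous.intervalIntegrable (by continuity) 0 1)
    simp only [sub_self, zero_pow (Nat.succ_ne_zero b), zero_mul, one_mul, sub_zero,
      one_pow, zero_pow (Nat.succ_ne_zero a), zero_div, mul_zero, zero_sub] at h
    have hswap : (∫ x in (0:ℝ)..1, x ^ a * (1 - x) ^ (b + 1))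
        = ∫ x in (0:ℝ)..1, (1 - x) ^ (b + 1) * x ^ a := by congr 1; ext x; ring
    have hL : (∫ x in (0:ℝ)..1, (1 - x) ^ (b + 1) * x ^ a)
        = ((b:ℝ) + 1) / ((a:ℝ) + 1) * ∫ x in (0:ℝ)..1, x ^ (a + 1) * (1 - x) ^ b := by
      rw [h, ← intervalIntegral.integral_neg, ← intervalIntegral.integral_const_mul]
      congr 1; ext x; field_simp
    rw [hswap, hL, ih (a + 1)]
    rw [show (a + 1) + b + 1 = a + (b+1) + 1 from by omega]
    have hfac : (Nat.factorial (a + (b+1) + 1) : ℝ) ≠ 0 := by positivity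
    field_simp
    rw [Nat.factorial_succ (a), Nat.factorial_succ (b)]
    push_cast; ring

lemma natDegree_P (k : ℕ) : (P k).natDegree ≤ k :=
  (natDegree_C_mul_le _ _).trans (natDegree_D_W k)

lemma coeff_P (k : ℕ) : (P k).coeff k = (1 / (Nat.factorial k : ℝ)) * ((2 * k).descFactorial k) := by
  unfold P; rw [coeff_C_mul, coeff_D_W]

lemma coeff_P_ne_zero (k : ℕ) : (P k).coeff k ≠ 0 := by
  rw [coeff_P]
  have h1 : (0:ℝ) < (Nat.factorial k : ℝ) := by positivity
  have h2 : (2 * k).descFactorial k ≠ 0 := by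
    rw [Ne, Nat.descFactorial_eq_zero_iff_lt]; omega
  have h3 : (0:ℝ) < ((2 * k).descFactorial k : ℝ) := by
    exact_mod_cast Nat.pos_of_ne_zero h2
  positivity

lemma int_W (k : ℕ) : (∫ x in (0:ℝ)..1, (W k).eval x)
    = (-1 : ℝ) ^ k * ((Nat.factorial k * Nat.factorial k : ℝ) / (Nat.factorial (2 * k + 1))) := by
  have : ∀ x : ℝ, (W k).eval x = (-1 : ℝ) ^ k * (x ^ k * (1 - x) ^ k) := by
    intro x
    unfold W
    simp only [eval_pow, eval_sub, eval_X, eval_mul]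
    rw [← mul_pow, ← neg_pow]
    congr 1
    ring
  simp_rw [this]
  rw [intervalIntegral.integral_const_mul, beta_int k k]
  norm_num [two_mul]

lemma ip_P_self (k : ℕ) : ip (P k) (P k) = 1 / (2 * (k:ℝ) + 1) := by
  have hJ : (∫ x in (0:ℝ)..1, (derivative^[k] (W k)).eval x * (derivative^[k] (W k)).eval x)
      = ((2*k).factorial : ℝ) * ((Nat.factorial k * Nat.factorial k : ℝ) / (Nat.factorial (2 * k + 1))) := by
    rw [key k _ k le_rfl, Nat.sub_self, Function.iterate_zero_apply,
      show derivative^[k] (derivative^[k] (W k)) = derivative^[2*k] (W k) from by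
        rw [← Function.iterate_add_apply]; congr 1; omega,
      D2k_W]
    simp_rw [eval_C]
    have : (∫ x in (0:ℝ)..1, (W k).eval x * ((2*k).factorial : ℝ))
        = (((2*k).factorial : ℝ)) * ∫ x in (0:ℝ)..1, (W k).eval x := by
      rw [← intervalIntegral.integral_const_mul]; congr 1; ext x; ring
    rw [this, int_W]
    rcases Nat.even_or_odd k with he | ho
    · rw [he.neg_one_pow]; ring
    · rw [ho.neg_one_pow]; ring
  have hfk : ((Nat.factorial k : ℝ)) ≠ 0 := by positivity
  have h : ip (P k) (P k) = (1 / (Nat.factorial k : ℝ))^2 *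
      ∫ x in (0:ℝ)..1, (derivative^[k] (W k)).eval x * (derivative^[k] (W k)).eval x := by
    unfold ip P
    rw [← intervalIntegral.integral_const_mul]
    congr 1; ext x; simp only [eval_mul, eval_C]; ring
  rw [h, hJ, show 2*k+1 = (2*k)+1 from rfl, Nat.factorial_succ]
  have h2 : ((2*k).factorial : ℝ) ≠ 0 := by positivity
  have h3 : ((2*(k:ℝ)) + 1) ≠ 0 := by positivity
  field_simp
  push_cast
  ring

lemma ip_P_orth {j k : ℕ} (h : j ≠ k) : ip (P j) (P k) = 0 := by
  rcases Nat.lt_or_ge j k with hlt | hge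
  · rw [ip_comm]
    exact orth_lower k (P j) (lt_of_le_of_lt (natDegree_P j) hlt)
  · exact orth_lower j (P k) (lt_of_le_of_lt (natDegree_P k) (by omega))

lemma W_eq_mul (k : ℕ) : W k = X ^ k * (X - C 1) ^ k := by rw [W_eq, mul_pow]

lemma D_W_eval_one_self (k : ℕ) : (derivative^[k] (W k)).eval 1 = (Nat.factorial k : ℝ) := by
  rw [W_eq_mul, iterate_derivative_mul, eval_finset_sum]
  rw [Finset.sum_eq_single_of_mem k (Finset.self_mem_range_succ k)]
  · simp only [Nat.choose_self, one_smul, Nat.sub_self, Function.iterate_zero_apply,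
      iterate_derivative_X_sub_pow, Nat.descFactorial_self, eval_mul, eval_pow, eval_X, one_pow,
      nsmul_eq_mul, eval_natCast, eval_one, Nat.sub_self, pow_zero, mul_one, eval_smul]
    simp
  · intro i hi hne
    have hik : i ≤ k := Nat.lt_succ_iff.mp (Finset.mem_range.mp hi)
    rw [iterate_derivative_X_sub_pow]
    simp only [nsmul_eq_mul, eval_mul, eval_natCast, eval_pow, eval_sub, eval_X, eval_one, eval_C]
    rw [sub_self, zero_pow (by omega : k - i ≠ 0)]
    ring

lemma D_W_eval_zero_self (k : ℕ) :
    (derivative^[k] (W k)).eval 0 = (-1 : ℝ) ^ k * (Nat.factorial k : ℝ) := by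
  rw [W_eq_mul, iterate_derivative_mul, eval_finset_sum]
  rw [Finset.sum_eq_single_of_mem 0 (Finset.mem_range.mpr (Nat.succ_pos k))]
  · simp only [Nat.choose_zero_right, one_smul, Nat.sub_zero, Function.iterate_zero_apply,
      iterate_derivative_X_pow_eq_smul, Nat.descFactorial_self, Nat.sub_self, pow_zero,
      nsmul_eq_mul, eval_mul, eval_natCast, eval_pow, eval_sub, eval_X, eval_one, eval_C,
      eval_smul, smul_eq_mul, mul_one, eval_one]
    rw [zero_sub, neg_pow]
    ring
  · intro i hi hne
    have hik : i ≤ k := Nat.lt_succ_iff.mp (Finset.mem_range.mp hi)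
    rw [iterate_derivative_X_pow_eq_smul]
    have h1 : k - (k - i) = i := by omega
    rw [h1]
    simp only [nsmul_eq_mul, eval_mul, eval_natCast, eval_pow, eval_X, smul_eq_mul, eval_smul]
    rw [zero_pow (by omega : i ≠ 0)]
    ring

lemma P_eval_one (k : ℕ) : (P k).eval 1 = 1 := by
  unfold P
  rw [eval_mul, eval_C, D_W_eval_one_self]
  field_simp

lemma P_eval_zero (k : ℕ) : (P k).eval 0 = (-1 : ℝ) ^ k := by
  unfold P
  rw [eval_mul, eval_C, D_W_eval_zero_self]
  have : (Nat.factorial k : ℝ) ≠ 0 := by positivity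
  field_simp

lemma ip_sub_left (p q r : ℝ[X]) : ip (p - q) r = ip p r - ip q r := by
  unfold ip
  rw [← intervalIntegral.integral_sub (integ_mul p r) (integ_mul q r)]
  congr 1; ext x; simp [sub_mul]

lemma ip_Cmul_left (c : ℝ) (p r : ℝ[X]) : ip (C c * p) r = c * ip p r := by
  unfold ip
  rw [← intervalIntegral.integral_const_mul]
  congr 1; ext x; simp; ring

lemma ip_sum_left {ι : Type*} (s : Finset ι) (f : ι → ℝ[X]) (r : ℝ[X]) :
    ip (∑ i ∈ s, f i) r = ∑ i ∈ s, ip (f i) r := by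
  classical
  induction s using Finset.induction_on with
  | empty => simp [ip]
  | insert _ _ hne ih =>
    rw [Finset.sum_insert hne, Finset.sum_insert hne, ← ih]
    unfold ip
    rw [← intervalIntegral.integral_add (integ_mul _ _) (integ_mul _ _)]
    congr 1; ext x; simp [add_mul]

lemma span_zero : ∀ (n : ℕ) (q : ℝ[X]), q.degree < (n : ℕ) →
    (∀ j < n, ip q (P j) = 0) → q = 0 := by
  intro n
  induction n with
  | zero =>
    intro q hdeg _
    ext m
    simpa using (degree_lt_iff_coeff_zero q 0).mp (by exact_mod_cast hdeg) m (Nat.zero_le m)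
  | succ n ih =>
    intro q hdeg horth
    set c := q.coeff n / (P n).coeff n with hc
    have hr_deg : (q - C c * P n).degree < (n : ℕ) := by
      rw [degree_lt_iff_coeff_zero]
      intro m hm
      have hm' : n ≤ m := by exact_mod_cast hm
      rw [coeff_sub, coeff_C_mul]
      rcases eq_or_lt_of_le hm' with he | hlt
      · rw [← he, hc, div_mul_cancel₀ _ (coeff_P_ne_zero n), sub_self]
      · rw [coeff_eq_zero_of_degree_lt (lt_of_lt_of_le hdeg (by exact_mod_cast hlt)),
          coeff_eq_zero_of_natDegree_lt (lt_of_le_of_lt (natDegree_P n) hlt)]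
        ring
    have hr_orth : ∀ j < n, ip (q - C c * P n) (P j) = 0 := by
      intro j hj
      rw [ip_sub_left, ip_Cmul_left, horth j (by omega), ip_P_orth (by omega : n ≠ j)]
      ring
    have hr := ih _ hr_deg hr_orth
    have hq : q = C c * P n := by
      have := sub_eq_zero.mp hr
      linear_combination (norm := module) this
    have h0 : c * ip (P n) (P n) = 0 := by
      rw [← ip_Cmul_left, ← hq]
      exact horth n (Nat.lt_succ_self n)
    rw [ip_P_self] at h0
    have h1 : (2 * (n:ℝ) + 1) ≠ 0 := by positivity
    have hc0 : c = 0 := by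
      rcases mul_eq_zero.mp h0 with h | h
      · exact h
      · exact absurd h (by positivity)
    rw [hq, hc0, map_zero, zero_mul]

lemma derivative_P (k : ℕ) :
    derivative (P k) = ∑ j ∈ Finset.range k, C (ell k j) * P j := by
  rw [← sub_eq_zero]
  apply span_zero k
  · rw [degree_lt_iff_coeff_zero]
    intro m hm
    have hm' : k ≤ m := by exact_mod_cast hm
    rw [coeff_sub, coeff_derivative]
    rw [coeff_eq_zero_of_natDegree_lt (lt_of_le_of_lt (natDegree_P k) (by omega))]
    rw [finset_sum_coeff]
    have : ∀ j ∈ Finset.range k, (C (ell k j) * P j).coeff m = 0 := by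
      intro j hj
      rw [coeff_C_mul,
        coeff_eq_zero_of_natDegree_lt (lt_of_le_of_lt (natDegree_P j)
          (by have := Finset.mem_range.mp hj; omega))]
      ring
    rw [Finset.sum_eq_zero this]
    ring
  · intro j hj
    rw [ip_sub_left, ip_sum_left]
    have h1 : ip (derivative (P k)) (P j) = 1 - (-1 : ℝ) ^ (k + j) := by
      unfold ip
      rw [ibp, P_eval_one, P_eval_one, P_eval_zero, P_eval_zero]
      have : (∫ x in (0:ℝ)..1, (P k).eval x * (derivative (P j)).eval x) = 0 := by
        have := orth_lower k (derivative (P j))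
          (lt_of_le_of_lt (natDegree_derivative_le (P j))
            (by have := natDegree_P j; omega))
        unfold ip at this
        exact this
      rw [this, ← pow_add]
      ring
    have h2 : (∑ i ∈ Finset.range k, ip (C (ell k i) * P i) (P j))
        = 1 - (-1 : ℝ) ^ (k + j) := by
      rw [Finset.sum_eq_single_of_mem j (Finset.mem_range.mpr hj)]
      · rw [ip_Cmul_left, ip_P_self]
        unfold ell
        rw [if_pos hj]
        have : (2 * (j:ℝ) + 1) ≠ 0 := by positivity
        field_simp
      · intro i _ hne
        rw [ip_Cmul_left, ip_P_orth hne]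
        ring
    rw [h1, h2]
    ring

lemma iteratedDeriv_eval (q : ℝ[X]) : ∀ n : ℕ,
    iteratedDeriv n (fun x => q.eval x) = fun x => (derivative^[n] q).eval x := by
  intro n
  induction n with
  | zero => simp
  | succ n ih =>
    rw [iteratedDeriv_succ, ih]
    funext x
    rw [Function.iterate_succ_apply']
    exact (derivative^[n] q).deriv

lemma shiftedLegendre_eq (k : ℕ) (x : ℝ) : shiftedLegendre k x = (P k).eval x := by
  unfold _root_.shiftedLegendre P
  have h : (fun y : ℝ => (y ^ 2 - y) ^ k) = fun y => (W k).eval y := by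
    funext y; simp [W]
  rw [h, iteratedDeriv_eval]
  simp

lemma coeff_eq (u : ℝ → ℝ) (hu : ContDiff ℝ 1 u) (k : ℕ) :
    (∫ x in (0:ℝ)..1, deriv u x * (P k).eval x)
      = u 1 - (-1:ℝ)^k * u 0
        - ∑ j ∈ Finset.range k, ell k j * ∫ x in (0:ℝ)..1, u x * (P j).eval x := by
  have huc : Continuous u := hu.continuous
  have hgc : Continuous (deriv u) := hu.continuous_deriv le_rfl
  have hud : ∀ x : ℝ, HasDerivAt u (deriv u x) x := fun x =>
    (hu.differentiable one_ne_zero x).hasDerivAt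
  have h := integral_mul_deriv_eq_deriv_mul (a := (0:ℝ)) (b := 1)
    (u := fun x => (P k).eval x) (v := u)
    (u' := fun x => (derivative (P k)).eval x) (v' := deriv u)
    (fun x _ => (P k).hasDerivAt x) (fun x _ => hud x)
    (integ _) (hgc.intervalIntegrable 0 1)
  have hswap : (∫ x in (0:ℝ)..1, deriv u x * (P k).eval x)
      = ∫ x in (0:ℝ)..1, (P k).eval x * deriv u x := by congr 1; ext x; ring
  beta_reduce at h
  rw [hswap, h, P_eval_one, P_eval_zero]
  have hlast : (∫ x in (0:ℝ)..1, (derivative (P k)).eval x * u x)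
      = ∑ j ∈ Finset.range k, ell k j * ∫ x in (0:ℝ)..1, u x * (P j).eval x := by
    have hptw : ∀ x : ℝ, (derivative (P k)).eval x * u x
        = ∑ j ∈ Finset.range k, ell k j * (u x * (P j).eval x) := by
      intro x
      rw [derivative_P, eval_finset_sum, Finset.sum_mul]
      refine Finset.sum_congr rfl fun j _ => ?_
      rw [eval_mul, eval_C]; ring
    simp_rw [hptw]
    rw [intervalIntegral.integral_finset_sum]
    · refine Finset.sum_congr rfl fun j _ => ?_
      rw [intervalIntegral.integral_const_mul]
    · intro j _
      exact (continuous_const.mul (huc.mul (P j).continuous)).intervalIntegrable 0 1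
  rw [hlast]
  ring

lemma bessel_aux (g : ℝ → ℝ) (hgc : Continuous g) (n : ℕ) :
    (∫ x in (0:ℝ)..1, (g x)^2) ≥ ∑ k ∈ Finset.range n,
      (2*(k:ℝ)+1) * (∫ t in (0:ℝ)..1, g t * (P k).eval t)^2 := by
  set F : ℝ → ℝ := fun x => ∑ k ∈ Finset.range n,
      (2*(k:ℝ)+1) * (∫ t in (0:ℝ)..1, g t * (P k).eval t) * (P k).eval x with hF
  have hFc : Continuous F := by
    rw [hF]
    exact continuous_finset_sum _ (fun k _ => continuous_const.mul (P k).continuous)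
  have hGF : (∫ x in (0:ℝ)..1, g x * F x)
      = ∑ k ∈ Finset.range n, (2*(k:ℝ)+1) * (∫ t in (0:ℝ)..1, g t * (P k).eval t)^2 := by
    have h1 : ∀ x : ℝ, g x * F x = ∑ k ∈ Finset.range n,
        (2*(k:ℝ)+1) * (∫ t in (0:ℝ)..1, g t * (P k).eval t) * (g x * (P k).eval x) := by
      intro x
      rw [hF, Finset.mul_sum]
      refine Finset.sum_congr rfl fun k _ => ?_
      ring
    simp_rw [h1]
    rw [intervalIntegral.integral_finset_sum]
    · refine Finset.sum_congr rfl fun k _ => ?_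
      rw [intervalIntegral.integral_const_mul]
      ring
    · intro k _
      exact (continuous_const.mul (hgc.mul (P k).continuous)).intervalIntegrable 0 1
  have hFF : (∫ x in (0:ℝ)..1, F x * F x)
      = ∑ k ∈ Finset.range n, (2*(k:ℝ)+1) * (∫ t in (0:ℝ)..1, g t * (P k).eval t)^2 := by
    have h1 : ∀ x : ℝ, F x * F x = ∑ k ∈ Finset.range n, ∑ m ∈ Finset.range n,
        ((2*(k:ℝ)+1) * (∫ t in (0:ℝ)..1, g t * (P k).eval t)
          * ((2*(m:ℝ)+1) * (∫ t in (0:ℝ)..1, g t * (P m).eval t)))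
          * ((P k).eval x * (P m).eval x) := by
      intro x
      rw [hF, Finset.sum_mul_sum]
      refine Finset.sum_congr rfl fun k _ => Finset.sum_congr rfl fun m _ => ?_
      ring
    simp_rw [h1]
    rw [intervalIntegral.integral_finset_sum]
    · refine Finset.sum_congr rfl fun k hk => ?_
      rw [intervalIntegral.integral_finset_sum]
      · rw [Finset.sum_eq_single_of_mem k hk]
        · rw [intervalIntegral.integral_const_mul,
            show (∫ x in (0:ℝ)..1, (P k).eval x * (P k).eval x) = ip (P k) (P k) from rfl,
            ip_P_self]
          have : (2*(k:ℝ)+1) ≠ 0 := by positivity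
          field_simp
        · intro m _ hne
          rw [intervalIntegral.integral_const_mul,
            show (∫ x in (0:ℝ)..1, (P k).eval x * (P m).eval x) = ip (P k) (P m) from rfl,
            ip_P_orth (Ne.symm hne)]
          ring
      · intro m _
        exact (continuous_const.mul ((P k).continuous.mul (P m).continuous)).intervalIntegrable 0 1
    · intro k _
      refine Continuous.intervalIntegrable ?_ 0 1
      exact continuous_finset_sum _ fun m _ =>
        continuous_const.mul ((P k).continuous.mul (P m).continuous)
  have h0 : 0 ≤ ∫ x in (0:ℝ)..1, (g x - F x)^2 :=
    intervalIntegral.integral_nonneg (by norm_num) (fun x _ => sq_nonneg _)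
  have hexp : (∫ x in (0:ℝ)..1, (g x - F x)^2)
      = (∫ x in (0:ℝ)..1, (g x)^2) - 2 * (∫ x in (0:ℝ)..1, g x * F x)
        + ∫ x in (0:ℝ)..1, F x * F x := by
    have hptw : ∀ x : ℝ, (g x - F x)^2 = ((g x)^2 - 2 * (g x * F x)) + F x * F x :=
      fun x => by ring
    simp_rw [hptw]
    rw [intervalIntegral.integral_add, intervalIntegral.integral_sub,
      intervalIntegral.integral_const_mul]
    · exact (hgc.pow 2).intervalIntegrable 0 1
    · exact (continuous_const.mul (hgc.mul hFc)).intervalIntegrable 0 1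
    · exact ((hgc.pow 2).sub (continuous_const.mul (hgc.mul hFc))).intervalIntegrable 0 1
    · exact (hFc.mul hFc).intervalIntegrable 0 1
  rw [hexp, hGF, hFF] at h0
  linarith

end BesselAux

/-- Bessel bound for the spatial derivative in projected coordinates:
for continuously differentiable `u` and every `N`,
`∫₀¹ (u')² ≥ Σ_{k=0}^{N+1} (2k+1) (u(1) − (−1)^k u(0) − Σ_{j<k} ℓ_{kj} ⟨u, L_j⟩)²`. -/
theorem bessel_spatial_derivative (u : ℝ → ℝ) (hu : ContDiff ℝ 1 u) (N : ℕ) :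
    (∫ x in (0:ℝ)..1, (deriv u x) ^ 2) ≥
      ∑ k ∈ Finset.range (N + 2),
        (2 * (k : ℝ) + 1) *
          (u 1 - (-1 : ℝ) ^ k * u 0
            - ∑ j ∈ Finset.range k, ell k j * ∫ x in (0:ℝ)..1, u x * shiftedLegendre j x) ^ 2 := by
  have hgc : Continuous (deriv u) := hu.continuous_deriv le_rfl
  have hb := BesselAux.bessel_aux (deriv u) hgc (N + 2)
  have hsum : (∑ k ∈ Finset.range (N + 2),
        (2 * (k : ℝ) + 1) *
          (u 1 - (-1 : ℝ) ^ k * u 0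
            - ∑ j ∈ Finset.range k, ell k j
              * ∫ x in (0:ℝ)..1, u x * shiftedLegendre j x) ^ 2)
      = ∑ k ∈ Finset.range (N + 2),
        (2*(k:ℝ)+1) * (∫ t in (0:ℝ)..1, deriv u t * (BesselAux.P k).eval t)^2 := by
    refine Finset.sum_congr rfl fun k _ => ?_
    rw [BesselAux.coeff_eq u hu k]
    have : ∀ j : ℕ, (∫ x in (0:ℝ)..1, u x * shiftedLegendre j x)
        = ∫ x in (0:ℝ)..1, u x * (BesselAux.P j).eval x := by
      intro j; congr 1; ext x; rw [BesselAux.shiftedLegendre_eq]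
    simp_rw [this]
  rw [ge_iff_le, hsum]
  exact hb
end
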